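/- Let k ≥ 2. For β ∈ ℝ and B > 0, let v(β,B) = ∫_{-B}^{B} e(β ξ^k) dξ, where e(z) = exp(2πiz). Then |v(β,B)| ≪ B(1 + B^k|β|)^{-1/k}, with implied constant depending only on k. -/

import Mathlib

open Real intervalIntegral

noncomputable def ee (z : ℝ) : ℂ := Complex.exp (2 * Real.pi * Complex.I * z)

lemma ee_norm (z : ℝ) : ‖ee z‖ = 1 := by
  simp [ee, Complex.norm_exp]

lemma ee_eq (c u : ℝ) (k : ℕ) :
    ee (c * u ^ k) = Complex.exp (2 * (π:ℂ) * Complex.I * (c:ℂ) * (u:ℂ) ^ k) := by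
  unfold ee; push_cast; ring_nf

lemma ee_comp_cont (c : ℝ) (k : ℕ) : Continuous fun u : ℝ => ee (c * u ^ k) := by
  unfold ee; fun_prop

lemma phi_hasDerivAt (c : ℝ) (k : ℕ) (u : ℝ) :
    HasDerivAt (fun u : ℝ => ee (c * u ^ k))
      (ee (c * u ^ k) * (2 * (π:ℂ) * Complex.I * (c:ℂ) * ((k:ℂ) * (u:ℂ) ^ (k - 1)))) u := by
  have h1 : HasDerivAt (fun z : ℂ => 2 * (π:ℂ) * Complex.I * (c:ℂ) * z ^ k)
      (2 * (π:ℂ) * Complex.I * (c:ℂ) * ((k:ℂ) * (u:ℂ) ^ (k-1))) (u:ℂ) :=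
    (hasDerivAt_pow k (u:ℂ)).const_mul _
  have h2 := h1.comp_ofReal.cexp
  simp only [← ee_eq] at h2
  exact h2

lemma g_hasDerivAt (a : ℂ) (k : ℕ) (u : ℝ) (hu : u ≠ 0) :
    HasDerivAt (fun x : ℝ => a * ((x:ℂ) ^ (k - 1))⁻¹)
      (a * (-(((k-1:ℕ):ℂ) * (u:ℂ) ^ (k - 1 - 1)) / ((u:ℂ) ^ (k - 1)) ^ 2)) u := by
  have h1 : HasDerivAt (fun z : ℂ => z ^ (k-1)) (((k-1:ℕ):ℂ) * (u:ℂ) ^ (k-1-1)) (u:ℂ) :=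
    hasDerivAt_pow (k-1) (u:ℂ)
  have h2 : HasDerivAt (fun z : ℂ => (z ^ (k-1))⁻¹)
      (-(((k-1:ℕ):ℂ) * (u:ℂ) ^ (k - 1 - 1)) / ((u:ℂ) ^ (k - 1)) ^ 2) (u:ℂ) :=
    h1.inv (pow_ne_zero _ (Complex.ofReal_ne_zero.mpr hu))
  exact h2.comp_ofReal.const_mul a

lemma ibp_bound (k : ℕ) (hk : 2 ≤ k) (c : ℝ) (hc : |c| = 1) (A : ℝ) (hA : 1 ≤ A) :
    ‖∫ u in (1:ℝ)..A, ee (c * u ^ k)‖ ≤ 2 := by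
  have hc0 : c ≠ 0 := fun h => by simp [h] at hc
  have hπ := Real.pi_gt_three
  set b : ℂ := 2 * (π:ℂ) * Complex.I * (c:ℂ) * (k:ℂ) with hbdef
  have hbnorm : ‖b‖ = 2 * π * k := by
    simp [hbdef, norm_mul, Complex.norm_real, Complex.norm_natCast, Complex.norm_I,
      abs_of_pos Real.pi_pos, hc]
  have hb : b ≠ 0 := by
    rw [← norm_pos_iff, hbnorm]
    have : (2:ℝ) ≤ (k:ℝ) := by exact_mod_cast hk
    nlinarith
  set a : ℂ := b⁻¹ with hadef
  have hanorm : ‖a‖ = (2 * π * k)⁻¹ := by rw [hadef, norm_inv, hbnorm]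
  have hkR : (2:ℝ) ≤ (k:ℝ) := by exact_mod_cast hk
  have hahalf : ‖a‖ ≤ 1/2 := by
    rw [hanorm]
    rw [inv_le_comm₀ (by nlinarith) (by norm_num)]
    nlinarith
  set φ : ℝ → ℂ := fun u => ee (c * u ^ k) with hφdef
  set φ' : ℝ → ℂ := fun u =>
    ee (c * u ^ k) * (2 * (π:ℂ) * Complex.I * (c:ℂ) * ((k:ℂ) * (u:ℂ) ^ (k - 1))) with hφ'def
  set g : ℝ → ℂ := fun u => a * ((u:ℂ) ^ (k - 1))⁻¹ with hgdef
  set g' : ℝ → ℂ := fun u =>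
    a * (-(((k-1:ℕ):ℂ) * (u:ℂ) ^ (k - 1 - 1)) / ((u:ℂ) ^ (k - 1)) ^ 2) with hg'def
  have huIcc : Set.uIcc (1:ℝ) A = Set.Icc 1 A := Set.uIcc_of_le hA
  have hupos : ∀ u ∈ Set.uIcc (1:ℝ) A, (0:ℝ) < u := by
    intro u hu; rw [huIcc] at hu; linarith [hu.1]
  have hφd : ∀ u ∈ Set.uIcc (1:ℝ) A, HasDerivAt φ (φ' u) u := fun u _ => phi_hasDerivAt c k u
  have hgd : ∀ u ∈ Set.uIcc (1:ℝ) A, HasDerivAt g (g' u) u := fun u hu =>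
    g_hasDerivAt a k u (ne_of_gt (hupos u hu))
  have hφ'c : Continuous φ' := by
    apply (ee_comp_cont c k).mul; fun_prop
  have hg'c : ContinuousOn g' (Set.uIcc (1:ℝ) A) := by
    apply continuousOn_const.mul
    apply ContinuousOn.div (by fun_prop) (by fun_prop)
    intro u hu
    exact pow_ne_zero _ (pow_ne_zero _ (Complex.ofReal_ne_zero.mpr (ne_of_gt (hupos u hu))))
  have hgc : ContinuousOn g (Set.uIcc (1:ℝ) A) := by
    apply continuousOn_const.mul
    apply ContinuousOn.inv₀ (by fun_prop)
    intro u hu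
    exact pow_ne_zero _ (Complex.ofReal_ne_zero.mpr (ne_of_gt (hupos u hu)))
  have hφ'i : IntervalIntegrable φ' MeasureTheory.volume 1 A := hφ'c.intervalIntegrable _ _
  have hg'i : IntervalIntegrable g' MeasureTheory.volume 1 A := hg'c.intervalIntegrable
  have hibp := integral_deriv_mul_eq_sub hφd hgd hφ'i hg'i
  have hφ'gi : IntervalIntegrable (fun u => φ' u * g u) MeasureTheory.volume 1 A :=
    (hφ'c.continuousOn.mul hgc).intervalIntegrable
  have hφg'i : IntervalIntegrable (fun u => φ u * g' u) MeasureTheory.volume 1 A :=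
    (((ee_comp_cont c k).continuousOn).mul hg'c).intervalIntegrable
  have hsplit : (∫ u in (1:ℝ)..A, (φ' u * g u + φ u * g' u))
      = (∫ u in (1:ℝ)..A, φ' u * g u) + ∫ u in (1:ℝ)..A, φ u * g' u :=
    integral_add hφ'gi hφg'i
  have hcongr : (∫ u in (1:ℝ)..A, φ u) = ∫ u in (1:ℝ)..A, φ' u * g u := by
    apply integral_congr
    intro u hu
    have hu0 : (u:ℂ) ^ (k - 1) ≠ 0 :=
      pow_ne_zero _ (Complex.ofReal_ne_zero.mpr (ne_of_gt (hupos u hu)))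
    simp only [hφdef, hφ'def, hgdef, hadef]
    field_simp
    rw [hbdef]; ring
  have hkey : (∫ u in (1:ℝ)..A, φ u)
      = (φ A * g A - φ 1 * g 1) - ∫ u in (1:ℝ)..A, φ u * g' u := by
    rw [hcongr]
    rw [hsplit] at hibp
    linear_combination hibp
  -- norm bounds
  have hgnorm : ∀ u : ℝ, 1 ≤ u → ‖g u‖ ≤ 1/2 := by
    intro u hu1
    have : ‖g u‖ = ‖a‖ * ‖(u:ℂ) ^ (k-1)‖⁻¹ := by
      rw [hgdef]; simp [norm_mul]
    rw [this]
    have h1 : (1:ℝ) ≤ ‖(u:ℂ) ^ (k-1)‖ := by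
      rw [norm_pow, Complex.norm_real, Real.norm_eq_abs, abs_of_pos (by linarith)]
      exact one_le_pow₀ hu1
    calc ‖a‖ * ‖(u:ℂ) ^ (k-1)‖⁻¹ ≤ ‖a‖ * 1 := by
          gcongr
          exact inv_le_one_of_one_le₀ h1
      _ ≤ 1/2 := by rw [mul_one]; exact hahalf
  have hφnorm : ∀ u : ℝ, ‖φ u‖ = 1 := fun u => ee_norm _
  have hptwise : ∀ u ∈ Set.Icc (1:ℝ) A, ‖φ u * g' u‖ ≤ (u^2)⁻¹ := by
    intro u hu
    have hu1 : (1:ℝ) ≤ u := hu.1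
    have hup : (0:ℝ) < u := by linarith
    have hnorm : ‖φ u * g' u‖
        = ‖a‖ * (((k-1:ℕ):ℝ) * u ^ (k-1-1) / (u ^ (k-1)) ^ 2) := by
      rw [hφdef, hg'def]
      simp [norm_mul, norm_div, norm_pow, norm_neg, Complex.norm_real, Complex.norm_natCast,
        Real.norm_eq_abs, abs_of_pos hup, ee_norm, mul_div_assoc]
    rw [hnorm]
    have hpow : u ^ (k-1-1) * u^2 ≤ (u ^ (k-1)) ^ 2 := by
      rw [← pow_add, ← pow_mul]
      exact pow_le_pow_right₀ hu1 (by omega)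
    have hfrac : u ^ (k-1-1) / (u ^ (k-1)) ^ 2 ≤ (u^2)⁻¹ := by
      rw [inv_eq_one_div, div_le_div_iff₀ (by positivity) (by positivity), one_mul]
      exact hpow
    have ha1 : ‖a‖ * ((k-1:ℕ):ℝ) ≤ 1 := by
      rw [hanorm]
      have hk1 : ((k-1:ℕ):ℝ) ≤ (k:ℝ) := by exact_mod_cast Nat.sub_le k 1
      rw [inv_mul_le_iff₀ (by nlinarith), mul_one]
      nlinarith
    calc ‖a‖ * (((k-1:ℕ):ℝ) * u ^ (k-1-1) / (u ^ (k-1)) ^ 2)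
        = (‖a‖ * ((k-1:ℕ):ℝ)) * (u ^ (k-1-1) / (u ^ (k-1)) ^ 2) := by ring
      _ ≤ 1 * (u^2)⁻¹ := by
          apply mul_le_mul ha1 hfrac (by positivity) (by norm_num)
      _ = (u^2)⁻¹ := one_mul _
  have hInt2 : (∫ u in (1:ℝ)..A, ((u:ℝ)^2)⁻¹) ≤ 1 := by
    have h0 : (0:ℝ) ∉ Set.uIcc (1:ℝ) A := by
      rw [Set.uIcc_of_le hA]; simp
    have h := integral_zpow (a := (1:ℝ)) (b := A) (n := -2) (Or.inr ⟨by norm_num, h0⟩)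
    have heq : (∫ u in (1:ℝ)..A, ((u:ℝ)^2)⁻¹) = ∫ u in (1:ℝ)..A, (u:ℝ) ^ (-2:ℤ) := by
      apply intervalIntegral.integral_congr
      intro u hu
      simp [zpow_neg]
    rw [heq, h]
    have hAinv : 0 ≤ A⁻¹ := by positivity
    norm_num [zpow_neg]
    nlinarith
  have hc2 : ContinuousOn (fun u : ℝ => ((u:ℝ)^2)⁻¹) (Set.uIcc (1:ℝ) A) := by
    apply ContinuousOn.inv₀ (by fun_prop)
    intro u hu
    have := hupos u hu
    positivity
  have hIφg' : ‖∫ u in (1:ℝ)..A, φ u * g' u‖ ≤ 1 := by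
    calc ‖∫ u in (1:ℝ)..A, φ u * g' u‖ ≤ ∫ u in (1:ℝ)..A, ‖φ u * g' u‖ :=
        intervalIntegral.norm_integral_le_integral_norm hA
      _ ≤ ∫ u in (1:ℝ)..A, ((u:ℝ)^2)⁻¹ := by
          apply intervalIntegral.integral_mono_on hA hφg'i.norm hc2.intervalIntegrable
          exact hptwise
      _ ≤ 1 := hInt2
  have h1 : ‖φ A * g A‖ ≤ 1/2 := by rw [norm_mul, hφnorm, one_mul]; exact hgnorm A hA
  have h2 : ‖φ 1 * g 1‖ ≤ 1/2 := by rw [norm_mul, hφnorm, one_mul]; exact hgnorm 1 le_rfl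
  rw [hkey]
  calc ‖(φ A * g A - φ 1 * g 1) - ∫ u in (1:ℝ)..A, φ u * g' u‖
      ≤ ‖φ A * g A - φ 1 * g 1‖ + ‖∫ u in (1:ℝ)..A, φ u * g' u‖ := norm_sub_le _ _
    _ ≤ (‖φ A * g A‖ + ‖φ 1 * g 1‖) + 1 := add_le_add (norm_sub_le _ _) hIφg'
    _ ≤ (1/2 + 1/2) + 1 := add_le_add (add_le_add h1 h2) le_rfl
    _ = 2 := by norm_num

noncomputable def vv (k : ℕ) (β B : ℝ) : ℂ := ∫ ξ in (-B)..B, ee (β * ξ ^ k)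

lemma core_bound (k : ℕ) (hk : 2 ≤ k) (c : ℝ) (hc : |c| = 1) (A : ℝ) (hA : 0 ≤ A) :
    ‖∫ u in (0:ℝ)..A, ee (c * u ^ k)‖ ≤ 3 := by
  have hint : ∀ a b : ℝ, IntervalIntegrable (fun u : ℝ => ee (c * u ^ k))
      MeasureTheory.volume a b := fun a b => (ee_comp_cont c k).intervalIntegrable a b
  rcases le_or_gt A 1 with h | h
  · have h1 := intervalIntegral.norm_integral_le_of_norm_le_const (C := 1) (a := (0:ℝ)) (b := A)
      (f := fun u : ℝ => ee (c * u ^ k)) (fun x _ => le_of_eq (ee_norm _))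
    calc ‖∫ u in (0:ℝ)..A, ee (c * u ^ k)‖ ≤ 1 * |A - 0| := h1
      _ ≤ 3 := by rw [sub_zero, abs_of_nonneg hA]; linarith
  · rw [← intervalIntegral.integral_add_adjacent_intervals (hint 0 1) (hint 1 A)]
    have h1 := intervalIntegral.norm_integral_le_of_norm_le_const (C := 1) (a := (0:ℝ)) (b := 1)
      (f := fun u : ℝ => ee (c * u ^ k)) (fun x _ => le_of_eq (ee_norm _))
    calc ‖(∫ u in (0:ℝ)..1, ee (c * u ^ k)) + ∫ u in (1:ℝ)..A, ee (c * u ^ k)‖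
        ≤ ‖∫ u in (0:ℝ)..1, ee (c * u ^ k)‖ + ‖∫ u in (1:ℝ)..A, ee (c * u ^ k)‖ :=
          norm_add_le _ _
      _ ≤ 1 * |1 - 0| + 2 := add_le_add h1 (ibp_bound k hk c hc A h.le)
      _ = 3 := by norm_num

lemma full_bound (k : ℕ) (hk : 2 ≤ k) (c : ℝ) (hc : |c| = 1) (A : ℝ) (hA : 0 ≤ A) :
    ‖∫ u in (-A)..A, ee (c * u ^ k)‖ ≤ 6 := by
  have hint : ∀ a b : ℝ, IntervalIntegrable (fun u : ℝ => ee (c * u ^ k))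
      MeasureTheory.volume a b := fun a b => (ee_comp_cont c k).intervalIntegrable a b
  rw [← intervalIntegral.integral_add_adjacent_intervals (hint (-A) 0) (hint 0 A)]
  have hc' : |c * (-1:ℝ)^k| = 1 := by
    rw [abs_mul, abs_pow, abs_neg, abs_one, one_pow, mul_one, hc]
  have hneg : (∫ u in (-A)..(0:ℝ), ee (c * u ^ k))
      = ∫ u in (0:ℝ)..A, ee ((c * (-1:ℝ)^k) * u ^ k) := by
    have h := intervalIntegral.integral_comp_neg (a := (0:ℝ)) (b := A)
      (fun u => ee (c * u ^ k))
    rw [neg_zero] at h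
    rw [← h]
    apply intervalIntegral.integral_congr
    intro u _
    show ee (c * (-u) ^ k) = ee ((c * (-1:ℝ)^k) * u ^ k)
    congr 1
    ring
  calc ‖(∫ u in (-A)..(0:ℝ), ee (c * u ^ k)) + ∫ u in (0:ℝ)..A, ee (c * u ^ k)‖
      ≤ ‖∫ u in (-A)..(0:ℝ), ee (c * u ^ k)‖ + ‖∫ u in (0:ℝ)..A, ee (c * u ^ k)‖ :=
        norm_add_le _ _
    _ ≤ 3 + 3 := by
        apply add_le_add
        · rw [hneg]; exact core_bound k hk _ hc' A hA
        · exact core_bound k hk c hc A hA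
    _ = 6 := by norm_num

lemma scaled_bound (k : ℕ) (hk : 2 ≤ k) (β : ℝ) (hβ : β ≠ 0) (B : ℝ) (hB : 0 < B) :
    ‖vv k β B‖ ≤ 6 * |β| ^ (-(1:ℝ)/k) := by
  have hβpos : 0 < |β| := abs_pos.mpr hβ
  have hk0 : (k:ℝ) ≠ 0 := Nat.cast_ne_zero.mpr (by omega)
  set lam := |β| ^ (-(1:ℝ)/k) with hlam
  have hlampos : 0 < lam := Real.rpow_pos_of_pos hβpos _
  have hlamk : lam ^ k * |β| = 1 := by
    rw [hlam, ← Real.rpow_natCast (|β| ^ (-(1:ℝ)/k)) k, ← Real.rpow_mul hβpos.le]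
    have he : (-(1:ℝ)/k) * k = -1 := by field_simp
    rw [he, Real.rpow_neg_one, inv_mul_cancel₀ (ne_of_gt hβpos)]
  have hcm := intervalIntegral.integral_comp_mul_left (a := -(B/lam)) (b := B/lam)
    (fun ξ : ℝ => ee (β * ξ ^ k)) (ne_of_gt hlampos)
  have hBlam : lam * (B / lam) = B := by field_simp
  have hkey : vv k β B = lam • ∫ x in (-(B/lam))..(B/lam), ee (β * (lam * x) ^ k) := by
    rw [hcm, smul_smul, mul_inv_cancel₀ (ne_of_gt hlampos), one_smul]
    unfold vv
    rw [mul_neg, hBlam]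
  have hcongr : (∫ x in (-(B/lam))..(B/lam), ee (β * (lam * x) ^ k))
      = ∫ x in (-(B/lam))..(B/lam), ee ((β * lam ^ k) * x ^ k) := by
    apply intervalIntegral.integral_congr
    intro x _
    show ee (β * (lam * x) ^ k) = ee ((β * lam ^ k) * x ^ k)
    congr 1
    ring
  have hc1 : |β * lam ^ k| = 1 := by
    rw [abs_mul, abs_pow, abs_of_pos hlampos, mul_comm]
    exact hlamk
  have hfull := full_bound k hk (β * lam ^ k) hc1 (B / lam) (by positivity)
  rw [hkey, hcongr, norm_smul, Real.norm_eq_abs, abs_of_pos hlampos]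
  calc lam * ‖∫ x in (-(B/lam))..(B/lam), ee ((β * lam ^ k) * x ^ k)‖
      ≤ lam * 6 := mul_le_mul_of_nonneg_left hfull hlampos.le
    _ = 6 * lam := by ring

/-- `|v(β,B)| ≪ B (1 + B^k |β|)^(-1/k)`, uniformly in `β ∈ ℝ`, `B > 0`. -/
theorem stmt_7 (k : ℕ) (hk : 2 ≤ k) :
    ∃ C : ℝ, 0 < C ∧ ∀ β B : ℝ, 0 < B →
      ‖vv k β B‖ ≤ C * B * (1 + B ^ k * |β|) ^ (-(1 : ℝ) / k) := by
  refine ⟨12, by norm_num, ?_⟩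
  intro β B hB
  have hkpos : (0:ℝ) < k := by exact_mod_cast (by omega : 0 < k)
  have htriv : ‖vv k β B‖ ≤ 2 * B := by
    have h1 := intervalIntegral.norm_integral_le_of_norm_le_const (C := 1) (a := -B) (b := B)
      (f := fun ξ : ℝ => ee (β * ξ ^ k)) (fun x _ => le_of_eq (ee_norm _))
    calc ‖vv k β B‖ ≤ 1 * |B - -B| := h1
      _ = 2 * B := by rw [one_mul, abs_of_nonneg (by linarith)]; ring
  set t := B ^ k * |β| with ht
  have htnn : 0 ≤ t := by positivity
  have hexp : -(1:ℝ)/(k:ℝ) = -((1:ℝ)/k) := by ring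
  have h2e : (2:ℝ) ^ ((1:ℝ)/k) ≤ 2 := by
    calc (2:ℝ) ^ ((1:ℝ)/k) ≤ 2 ^ (1:ℝ) := by
          apply Real.rpow_le_rpow_of_exponent_le one_le_two
          rw [div_le_one hkpos]
          exact_mod_cast (by omega : 1 ≤ k)
      _ = 2 := Real.rpow_one 2
  rcases le_or_gt t 1 with h | h
  · have hpos1t : (0:ℝ) < 1 + t := by linarith
    have h1 : (1+t) ^ ((1:ℝ)/k) ≤ 2 := by
      calc (1+t) ^ ((1:ℝ)/k) ≤ 2 ^ ((1:ℝ)/k) :=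
            Real.rpow_le_rpow (by linarith) (by linarith) (by positivity)
        _ ≤ 2 := h2e
    have hpos : 0 < (1+t) ^ ((1:ℝ)/k) := Real.rpow_pos_of_pos hpos1t _
    have hr : (1/2 : ℝ) ≤ (1 + t) ^ (-(1:ℝ)/k) := by
      rw [hexp, Real.rpow_neg hpos1t.le]
      rw [show (1/2:ℝ) = 2⁻¹ by norm_num]
      exact inv_anti₀ hpos h1
    have h2 : 12 * B * (1/2 : ℝ) ≤ 12 * B * ((1+t) ^ (-(1:ℝ)/k)) :=
      mul_le_mul_of_nonneg_left hr (by positivity)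
    calc ‖vv k β B‖ ≤ 2 * B := htriv
      _ ≤ 12 * B * (1/2 : ℝ) := by linarith
      _ ≤ 12 * B * ((1+t) ^ (-(1:ℝ)/k)) := h2
  · have hβ : β ≠ 0 := by
      intro h0
      rw [h0] at ht
      simp at ht
      rw [ht] at h
      norm_num at h
    have hβpos : 0 < |β| := abs_pos.mpr hβ
    have hs := scaled_bound k hk β hβ B hB
    have hte : t ^ ((1:ℝ)/k) = B * |β| ^ ((1:ℝ)/k) := by
      rw [ht, Real.mul_rpow (by positivity) (abs_nonneg _),
        ← Real.rpow_natCast B k, ← Real.rpow_mul hB.le]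
      rw [mul_one_div, div_self (ne_of_gt hkpos), Real.rpow_one]
    have hpos1t : (0:ℝ) < 1 + t := by linarith
    have h2t : (1+t) ^ ((1:ℝ)/k) ≤ 2 * (B * |β| ^ ((1:ℝ)/k)) := by
      calc (1+t) ^ ((1:ℝ)/k) ≤ (2*t) ^ ((1:ℝ)/k) :=
            Real.rpow_le_rpow (by linarith) (by linarith) (by positivity)
        _ = 2 ^ ((1:ℝ)/k) * t ^ ((1:ℝ)/k) := Real.mul_rpow (by norm_num) htnn
        _ ≤ 2 * (B * |β| ^ ((1:ℝ)/k)) := by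
            rw [hte]
            apply mul_le_mul_of_nonneg_right h2e (by positivity)
    have hr : (2 * (B * |β| ^ ((1:ℝ)/k)))⁻¹ ≤ (1+t) ^ (-(1:ℝ)/k) := by
      rw [hexp, Real.rpow_neg hpos1t.le]
      exact inv_anti₀ (Real.rpow_pos_of_pos hpos1t _) h2t
    have hfin : 12 * B * (2 * (B * |β| ^ ((1:ℝ)/k)))⁻¹ = 6 * |β| ^ (-(1:ℝ)/k) := by
      rw [hexp, Real.rpow_neg (abs_nonneg _)]
      have hq : (0:ℝ) < |β| ^ ((1:ℝ)/k) := Real.rpow_pos_of_pos hβpos _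
      field_simp
      ring
    calc ‖vv k β B‖ ≤ 6 * |β| ^ (-(1:ℝ)/k) := hs
      _ = 12 * B * (2 * (B * |β| ^ ((1:ℝ)/k)))⁻¹ := hfin.symm
      _ ≤ 12 * B * ((1+t) ^ (-(1:ℝ)/k)) := mul_le_mul_of_nonneg_left hr (by positivity)
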